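/- Let M be the nested matroid on a finite set U defined by a partition (P_1,…,P_r) of U with |P_i| = n_i and integer thresholds τ_1,…,τ_r satisfying 0 ≤ τ_i ≤ n_i for every i. Then the dual matroid M* (whose independent sets are exactly the I ⊆ U such that U ∖ I contains a base of M) is the nested matroid defined by the reversed partition (P_r, P_{r−1}, …, P_2, P_1) and thresholds (n_r − τ_r, n_{r−1} − τ_{r−1}, …, n_1 − τ_1); equivalently, I ⊆ U is independent in M* if and only if Σ_{j=1}^{t} (|I ∩ P_j| − (n_j − τ_j)) ≤ 0 for all 1 ≤ t ≤ r. -/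

import Mathlib

/-- Independence in the nested matroid defined by a partition `Q 1, …, Q m` and integer
thresholds `σ 1, …, σ m`: a set `I` is independent iff
`Σ_{s=t}^m |I ∩ Q s| ≤ Σ_{s=t}^m σ s` for all `1 ≤ t ≤ m`. -/
def NIndep {α : Type*} [DecidableEq α] (m : ℕ) (Q : ℕ → Finset α) (σ : ℕ → ℤ)
    (I : Finset α) : Prop :=
  ∀ t ∈ Finset.Icc 1 m,
    (∑ s ∈ Finset.Icc t m, ((I ∩ Q s).card : ℤ)) ≤ ∑ s ∈ Finset.Icc t m, σ s

/-- The rank of `S` with respect to an independence predicate: the maximum cardinality of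
an independent subset of `S`. -/
noncomputable def nrank {α : Type*} (pred : Finset α → Prop) (S : Finset α) : ℕ :=
  sSup {c : ℕ | ∃ I : Finset α, I ⊆ S ∧ pred I ∧ I.card = c}

/-- `B` is a base (maximal independent set) for the independence predicate `pred`. -/
def IsNBase {α : Type*} (pred : Finset α → Prop) (B : Finset α) : Prop :=
  pred B ∧ ∀ B' : Finset α, pred B' → B ⊆ B' → B' = B


lemma icc_split (f : ℕ → ℤ) (r t : ℕ) (h1 : t ≤ r) :
    (∑ s ∈ Finset.Icc 1 t, f s) + ∑ s ∈ Finset.Icc (t+1) r, f s = ∑ s ∈ Finset.Icc 1 r, f s := by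
  rw [← Finset.sum_union (by
    rw [Finset.disjoint_left]; intro x hx hx'
    simp only [Finset.mem_Icc] at hx hx'; omega)]
  congr 1
  ext x
  simp only [Finset.mem_union, Finset.mem_Icc]
  omega

lemma icc_peel (f : ℕ → ℤ) (r t : ℕ) (h : t ≤ r) :
    ∑ s ∈ Finset.Icc t r, f s = f t + ∑ s ∈ Finset.Icc (t+1) r, f s := by
  have he : Finset.Icc t r = insert t (Finset.Icc (t+1) r) := by
    ext x; simp only [Finset.mem_Icc, Finset.mem_insert]; omega
  rw [he, Finset.sum_insert (by simp)]

lemma icc_peel_top (f : ℕ → ℤ) (t : ℕ) (h : 1 ≤ t) :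
    ∑ s ∈ Finset.Icc 1 t, f s = (∑ s ∈ Finset.Icc 1 (t-1), f s) + f t := by
  have he : Finset.Icc 1 t = insert t (Finset.Icc 1 (t-1)) := by
    ext x; simp only [Finset.mem_Icc, Finset.mem_insert]; omega
  rw [he, Finset.sum_insert (by simp only [Finset.mem_Icc]; omega)]
  ring

lemma partition_card {α : Type*} [DecidableEq α] (r : ℕ) (P : ℕ → Finset α)
    (hdisj : ∀ i ∈ Finset.Icc 1 r, ∀ j ∈ Finset.Icc 1 r, i ≠ j → Disjoint (P i) (P j))
    (hcover : ∀ a : α, ∃ i ∈ Finset.Icc 1 r, a ∈ P i)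
    (X : Finset α) : ∑ s ∈ Finset.Icc 1 r, ((X ∩ P s).card : ℤ) = X.card := by
  have hX : X = (Finset.Icc 1 r).biUnion (fun s => X ∩ P s) := by
    ext a
    simp only [Finset.mem_biUnion, Finset.mem_inter]
    constructor
    · intro ha
      obtain ⟨i, hi, hai⟩ := hcover a
      exact ⟨i, hi, ha, hai⟩
    · rintro ⟨i, _, ha, _⟩; exact ha
  have h2 : X.card = ∑ s ∈ Finset.Icc 1 r, (X ∩ P s).card := by
    conv_lhs => rw [hX]
    exact Finset.card_biUnion (fun i hi j hj hij =>
      (hdisj i hi j hj hij).mono Finset.inter_subset_right Finset.inter_subset_right)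
  rw [h2]
  push_cast
  rfl

lemma nbase_iff {α : Type*} [Fintype α] [DecidableEq α] (r : ℕ) (hr : 1 ≤ r)
    (P : ℕ → Finset α) (τ : ℕ → ℤ)
    (hdisj : ∀ i ∈ Finset.Icc 1 r, ∀ j ∈ Finset.Icc 1 r, i ≠ j → Disjoint (P i) (P j))
    (hcover : ∀ a : α, ∃ i ∈ Finset.Icc 1 r, a ∈ P i)
    (hτub : ∀ i ∈ Finset.Icc 1 r, τ i ≤ ((P i).card : ℤ)) (B : Finset α) :
    IsNBase (NIndep r P τ) B ↔
      NIndep r P τ B ∧ (B.card : ℤ) = ∑ s ∈ Finset.Icc 1 r, τ s := by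
  constructor
  · rintro ⟨hind, hmax⟩
    refine ⟨hind, ?_⟩
    by_contra hne
    -- B.card < T 1
    have h1mem : (1 : ℕ) ∈ Finset.Icc 1 r := by simp [hr]
    have hcardB : ∑ s ∈ Finset.Icc 1 r, ((B ∩ P s).card : ℤ) = B.card :=
      partition_card r P hdisj hcover B
    have hlt : (B.card : ℤ) < ∑ s ∈ Finset.Icc 1 r, τ s := by
      have := hind 1 h1mem
      rw [hcardB] at this
      omega
    -- tight set
    set Tset := (Finset.Icc 1 (r+1)).filter
      (fun t => (∑ s ∈ Finset.Icc t r, ((B ∩ P s).card : ℤ)) = ∑ s ∈ Finset.Icc t r, τ s)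
      with hTset
    have hrmem : r + 1 ∈ Tset := by
      simp only [hTset, Finset.mem_filter, Finset.mem_Icc]
      constructor
      · omega
      · rw [Finset.Icc_eq_empty (by omega)]; simp
    have hne' : Tset.Nonempty := ⟨r+1, hrmem⟩
    set t₀ := Tset.min' hne' with ht₀
    have ht₀mem : t₀ ∈ Tset := Finset.min'_mem _ _
    have ht₀min : ∀ t ∈ Tset, t₀ ≤ t := fun t ht => Finset.min'_le _ _ ht
    obtain ⟨ht₀Icc, ht₀tight⟩ := Finset.mem_filter.mp ht₀mem
    rw [Finset.mem_Icc] at ht₀Icc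
    have ht₀ne1 : t₀ ≠ 1 := by
      intro h
      rw [h] at ht₀tight
      rw [hcardB] at ht₀tight
      omega
    have ht₀2 : 2 ≤ t₀ := by omega
    -- slack below t₀
    have hslack : ∀ t, 1 ≤ t → t < t₀ →
        (∑ s ∈ Finset.Icc t r, ((B ∩ P s).card : ℤ)) < ∑ s ∈ Finset.Icc t r, τ s := by
      intro t h1 h2
      have htr : t ≤ r := by omega
      have hle := hind t (by simp [Finset.mem_Icc]; omega)
      rcases lt_or_eq_of_le hle with h | h
      · exact h
      · exfalso
        have : t ∈ Tset := by
          simp only [hTset, Finset.mem_filter, Finset.mem_Icc]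
          exact ⟨⟨h1, by omega⟩, h⟩
        have := ht₀min t this
        omega
    -- prefix sums of B below t₀ are less than τ prefix, hence less than card prefix
    have ht01 : t₀ - 1 + 1 = t₀ := by omega
    have hsplitB : (∑ s ∈ Finset.Icc 1 (t₀-1), ((B ∩ P s).card : ℤ)) +
        ∑ s ∈ Finset.Icc t₀ r, ((B ∩ P s).card : ℤ) =
        ∑ s ∈ Finset.Icc 1 r, ((B ∩ P s).card : ℤ) := by
      have h := icc_split (fun s => ((B ∩ P s).card : ℤ)) r (t₀ - 1) (by omega)
      rw [ht01] at h
      exact h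
    have hsplitτ : (∑ s ∈ Finset.Icc 1 (t₀-1), τ s) + ∑ s ∈ Finset.Icc t₀ r, τ s =
        ∑ s ∈ Finset.Icc 1 r, τ s := by
      have h := icc_split τ r (t₀ - 1) (by omega)
      rw [ht01] at h
      exact h
    have hpreflt : (∑ s ∈ Finset.Icc 1 (t₀-1), ((B ∩ P s).card : ℤ)) <
        ∑ s ∈ Finset.Icc 1 (t₀-1), τ s := by
      have h1 := hslack 1 le_rfl (by omega)
      omega
    have hexists : ∃ j ∈ Finset.Icc 1 (t₀-1), ((B ∩ P j).card : ℤ) < ((P j).card : ℤ) := by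
      apply Finset.exists_lt_of_sum_lt
      calc (∑ s ∈ Finset.Icc 1 (t₀-1), ((B ∩ P s).card : ℤ))
          < ∑ s ∈ Finset.Icc 1 (t₀-1), τ s := hpreflt
        _ ≤ ∑ s ∈ Finset.Icc 1 (t₀-1), ((P s).card : ℤ) := by
            apply Finset.sum_le_sum
            intro i hi
            rw [Finset.mem_Icc] at hi
            exact hτub i (by simp [Finset.mem_Icc]; omega)
    obtain ⟨j, hjIcc, hjlt⟩ := hexists
    rw [Finset.mem_Icc] at hjIcc
    have hjr : j ∈ Finset.Icc 1 r := by simp [Finset.mem_Icc]; omega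
    -- find element to add
    have hnsub : ¬ P j ⊆ B := by
      intro hsub
      have : B ∩ P j = P j := Finset.inter_eq_right.mpr hsub
      rw [this] at hjlt
      omega
    obtain ⟨a, haP, haB⟩ := Finset.not_subset.mp hnsub
    -- insert a B is independent
    have hkey : ∀ s ∈ Finset.Icc 1 r,
        ((insert a B ∩ P s).card : ℤ) = ((B ∩ P s).card : ℤ) + (if s = j then 1 else 0) := by
      intro s hs
      by_cases hsj : s = j
      · subst hsj
        rw [Finset.insert_inter_of_mem haP,
          Finset.card_insert_of_notMem (fun h => haB (Finset.mem_inter.mp h).1)]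
        simp
      · have : a ∉ P s := by
          intro h
          exact (Finset.disjoint_left.mp (hdisj j hjr s hs (Ne.symm hsj)) haP) h
        rw [Finset.insert_inter_of_notMem this]
        simp [hsj]
    have hindins : NIndep r P τ (insert a B) := by
      intro t ht
      rw [Finset.mem_Icc] at ht
      have hsum : (∑ s ∈ Finset.Icc t r, ((insert a B ∩ P s).card : ℤ)) =
          (∑ s ∈ Finset.Icc t r, ((B ∩ P s).card : ℤ)) +
            (if j ∈ Finset.Icc t r then 1 else 0) := by
        rw [Finset.sum_congr rfl (fun s hs => hkey s (by
          rw [Finset.mem_Icc] at hs ⊢; omega)), Finset.sum_add_distrib,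
          Finset.sum_ite_eq' (Finset.Icc t r) j (fun _ => (1:ℤ))]
      rw [hsum]
      by_cases hjt : j ∈ Finset.Icc t r
      · rw [if_pos hjt]
        rw [Finset.mem_Icc] at hjt
        have := hslack t ht.1 (by omega)
        omega
      · rw [if_neg hjt]
        simp only [add_zero]
        exact hind t (by simp [Finset.mem_Icc]; omega)
    have := hmax (insert a B) hindins (Finset.subset_insert a B)
    exact haB (this ▸ Finset.mem_insert_self a B)
  · rintro ⟨hind, hcard⟩
    refine ⟨hind, fun B' hind' hsub => ?_⟩
    have hcardB' : ∑ s ∈ Finset.Icc 1 r, ((B' ∩ P s).card : ℤ) = B'.card :=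
      partition_card r P hdisj hcover B'
    have h1 := hind' 1 (by simp [hr])
    rw [hcardB'] at h1
    have : B'.card ≤ B.card := by omega
    exact Finset.Subset.antisymm (by
      intro x hx
      by_contra hxB
      have : B.card < B'.card := Finset.card_lt_card (Finset.ssubset_iff_of_subset hsub |>.mpr ⟨x, hx, hxB⟩)
      omega) hsub

/-- Greedy suffix sums for the construction of a base inside a given set. -/
def greedyS (r : ℕ) (c T : ℕ → ℤ) : ℕ → ℤ
  | 0 => 0
  | (k+1) => min (c (r - k) + greedyS r c T k) (T (r - k))

lemma exists_indep_full {α : Type*} [DecidableEq α] (r : ℕ) (hr : 1 ≤ r)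
    (P : ℕ → Finset α) (τ : ℕ → ℤ)
    (hdisj : ∀ i ∈ Finset.Icc 1 r, ∀ j ∈ Finset.Icc 1 r, i ≠ j → Disjoint (P i) (P j))
    (hcover : ∀ a : α, ∃ i ∈ Finset.Icc 1 r, a ∈ P i)
    (hτ0 : ∀ i ∈ Finset.Icc 1 r, 0 ≤ τ i)
    (C : Finset α)
    (hpre : ∀ t ∈ Finset.Icc 1 r,
      (∑ s ∈ Finset.Icc 1 t, τ s) ≤ ∑ s ∈ Finset.Icc 1 t, ((C ∩ P s).card : ℤ)) :
    ∃ B : Finset α, B ⊆ C ∧ NIndep r P τ B ∧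
      (B.card : ℤ) = ∑ s ∈ Finset.Icc 1 r, τ s := by
  set c : ℕ → ℤ := fun s => ((C ∩ P s).card : ℤ) with hc
  set T : ℕ → ℤ := fun t => ∑ s ∈ Finset.Icc t r, τ s with hT
  set S : ℕ → ℤ := fun t => greedyS r c T (r + 1 - t) with hS
  have hpre' : ∀ t ∈ Finset.Icc 1 r,
      (∑ s ∈ Finset.Icc 1 t, τ s) ≤ ∑ s ∈ Finset.Icc 1 t, c s := hpre
  have hTpeel : ∀ t, t ≤ r → T t = τ t + T (t+1) := fun t ht => icc_peel τ r t ht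
  have hT0 : T (r+1) = 0 := by
    simp only [hT]
    rw [Finset.Icc_eq_empty (by omega)]
    simp
  have hStop : S (r+1) = 0 := by
    simp only [hS, Nat.sub_self]
    rfl
  have hSrec : ∀ t, t ≤ r → S t = min (c t + S (t+1)) (T t) := by
    intro t ht
    simp only [hS]
    have h1 : r + 1 - t = (r - t) + 1 := by omega
    rw [h1]
    show min (c (r - (r - t)) + greedyS r c T (r - t)) (T (r - (r - t))) = _
    have h2 : r - (r - t) = t := by omega
    have h3 : r + 1 - (t + 1) = r - t := by omega
    rw [h2, h3]
  -- (1) S t ≤ T t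
  have hSleT : ∀ t, t ≤ r + 1 → S t ≤ T t := by
    intro t ht
    rcases Nat.lt_or_ge t (r+1) with h | h
    · rw [hSrec t (by omega)]; exact min_le_right _ _
    · have : t = r + 1 := by omega
      rw [this, hStop, hT0]
  -- (2) increments
  have hb0 : ∀ t, 1 ≤ t → t ≤ r → 0 ≤ S t - S (t+1) := by
    intro t h1 h2
    rw [hSrec t h2]
    have hc0 : 0 ≤ c t := by positivity
    have := hSleT (t+1) (by omega)
    have hτt := hτ0 t (by simp [Finset.mem_Icc]; omega)
    have := hTpeel t h2
    omega
  have hbc : ∀ t, 1 ≤ t → t ≤ r → S t - S (t+1) ≤ c t := by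
    intro t h1 h2
    rw [hSrec t h2]
    have := min_le_left (c t + S (t+1)) (T t)
    omega
  -- (3) lower bound on S
  have hSge : ∀ k, k ≤ r → T 1 - (∑ s ∈ Finset.Icc 1 (r - k), c s) ≤ S (r + 1 - k) := by
    intro k
    induction k with
    | zero =>
      intro _
      simp only [Nat.sub_zero, hStop]
      have := hpre' r (by simp [Finset.mem_Icc]; omega)
      simp only [hT]
      omega
    | succ k ih =>
      intro hk
      have ihk := ih (by omega)
      set t := r - k with htdef
      have ht1 : 1 ≤ t := by omega
      have htr : t ≤ r := by omega
      have he1 : r + 1 - (k+1) = t := by omega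
      have he2 : r - (k+1) = t - 1 := by omega
      have he3 : r + 1 - k = t + 1 := by omega
      rw [he1, he2]
      rw [he3] at ihk
      rw [hSrec t htr]
      apply le_min
      · have hpeel := icc_peel_top c t ht1
        omega
      · have hsplit : (∑ s ∈ Finset.Icc 1 (t-1), τ s) + ∑ s ∈ Finset.Icc t r, τ s =
            ∑ s ∈ Finset.Icc 1 r, τ s := by
          have h := icc_split τ r (t-1) (by omega)
          have : t - 1 + 1 = t := by omega
          rw [this] at h
          exact h
        have hpτ : (∑ s ∈ Finset.Icc 1 (t-1), τ s) ≤ ∑ s ∈ Finset.Icc 1 (t-1), c s := by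
          rcases Nat.eq_or_lt_of_le ht1 with h | h
          · rw [← h]
            simp
          · exact hpre' (t-1) (by simp [Finset.mem_Icc]; omega)
        simp only [hT]
        omega
  have hS1 : S 1 = T 1 := by
    have h1 := hSge r le_rfl
    simp only [Nat.sub_self] at h1
    have he : r + 1 - r = 1 := by omega
    rw [he] at h1
    simp only [Finset.Icc_eq_empty (by omega : ¬ (1:ℕ) ≤ 0), Finset.sum_empty, sub_zero] at h1
    have h2 := hSleT 1 (by omega)
    omega
  -- (4) choose subsets
  have hch : ∀ j, ∃ D : Finset α, j ∈ Finset.Icc 1 r →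
      (D ⊆ C ∩ P j ∧ (D.card : ℤ) = S j - S (j+1)) := by
    intro j
    by_cases hj : j ∈ Finset.Icc 1 r
    · rw [Finset.mem_Icc] at hj
      have h0 := hb0 j hj.1 hj.2
      have h1 := hbc j hj.1 hj.2
      have hle : (S j - S (j+1)).toNat ≤ (C ∩ P j).card := by
        simp only [hc] at h1
        omega
      obtain ⟨D, hD1, hD2⟩ := Finset.exists_subset_card_eq hle
      exact ⟨D, fun _ => ⟨hD1, by rw [hD2]; omega⟩⟩
    · exact ⟨∅, fun h => absurd h hj⟩
  choose D hD using hch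
  set B : Finset α := (Finset.Icc 1 r).biUnion D with hB
  have hBC : B ⊆ C := by
    apply Finset.biUnion_subset.mpr
    intro j hj
    exact ((hD j hj).1).trans Finset.inter_subset_left
  have hBP : ∀ s ∈ Finset.Icc 1 r, B ∩ P s = D s := by
    intro s hs
    ext x
    simp only [Finset.mem_inter, hB, Finset.mem_biUnion]
    constructor
    · rintro ⟨⟨j, hj, hxD⟩, hxP⟩
      have hxPj : x ∈ P j := (((hD j hj).1).trans Finset.inter_subset_right) hxD
      by_cases hjs : j = s
      · rwa [hjs] at hxD
      · exact absurd hxP (Finset.disjoint_left.mp (hdisj j hj s hs hjs) hxPj)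
    · intro hx
      exact ⟨⟨s, hs, hx⟩, (((hD s hs).1).trans Finset.inter_subset_right) hx⟩
  have hcardBP : ∀ s ∈ Finset.Icc 1 r, ((B ∩ P s).card : ℤ) = S s - S (s+1) := by
    intro s hs
    rw [hBP s hs]
    exact (hD s hs).2
  -- (7) suffix sums of B equal S
  have hFS : ∀ k, k ≤ r →
      (∑ s ∈ Finset.Icc (r+1-k) r, ((B ∩ P s).card : ℤ)) = S (r+1-k) := by
    intro k
    induction k with
    | zero =>
      intro _
      simp only [Nat.sub_zero]
      rw [Finset.Icc_eq_empty (by omega), hStop]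
      simp
    | succ k ih =>
      intro hk
      have ihk := ih (by omega)
      set t := r - k with htdef
      have he1 : r + 1 - (k+1) = t := by omega
      have he3 : r + 1 - k = t + 1 := by omega
      rw [he1]
      rw [he3] at ihk
      rw [icc_peel _ r t (by omega), ihk, hcardBP t (by simp [Finset.mem_Icc]; omega)]
      ring
  have hF : ∀ t, 1 ≤ t → t ≤ r →
      (∑ s ∈ Finset.Icc t r, ((B ∩ P s).card : ℤ)) = S t := by
    intro t h1 h2
    have := hFS (r + 1 - t) (by omega)
    have he : r + 1 - (r + 1 - t) = t := by omega
    rwa [he] at this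
  refine ⟨B, hBC, ?_, ?_⟩
  · intro t ht
    rw [Finset.mem_Icc] at ht
    rw [hF t ht.1 ht.2]
    exact hSleT t (by omega)
  · have := partition_card r P hdisj hcover B
    rw [← this, hF 1 le_rfl hr, hS1]


/-- The dual of the nested matroid defined by a partition
`P 1, …, P r` (with `|P i| = nvec i`) and thresholds `0 ≤ τ i ≤ nvec i` is the nested
matroid on the reversed partition with thresholds `nvec i − τ i`; equivalently, `I` is
independent in the dual iff `Σ_{j=1}^t (|I ∩ P j| − (nvec j − τ j)) ≤ 0` for all `1 ≤ t ≤ r`. -/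
theorem nested_matroid_dual
    {α : Type*} [Fintype α] [DecidableEq α]
    (r : ℕ) (hr : 1 ≤ r)
    (P : ℕ → Finset α) (nvec : ℕ → ℕ) (τ : ℕ → ℤ)
    (hdisj : ∀ i ∈ Finset.Icc 1 r, ∀ j ∈ Finset.Icc 1 r, i ≠ j → Disjoint (P i) (P j))
    (hcover : ∀ a : α, ∃ i ∈ Finset.Icc 1 r, a ∈ P i)
    (hcard : ∀ i ∈ Finset.Icc 1 r, (P i).card = nvec i)
    (hτ : ∀ i ∈ Finset.Icc 1 r, 0 ≤ τ i ∧ τ i ≤ (nvec i : ℤ))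
    (I : Finset α) :
    (∃ B : Finset α, IsNBase (NIndep r P τ) B ∧ B ⊆ Finset.univ \ I)
      ↔
    (∀ t ∈ Finset.Icc 1 r,
      (∑ j ∈ Finset.Icc 1 t, (((I ∩ P j).card : ℤ) - ((nvec j : ℤ) - τ j))) ≤ 0) := by
  have hτub : ∀ i ∈ Finset.Icc 1 r, τ i ≤ ((P i).card : ℤ) := by
    intro i hi
    rw [hcard i hi]
    exact (hτ i hi).2
  constructor
  · rintro ⟨B, hB, hBsub⟩
    intro t ht
    rw [Finset.mem_Icc] at ht
    obtain ⟨hBind, hBcard⟩ := (nbase_iff r hr P τ hdisj hcover hτub B).mp hB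
    have hdisjBI : Disjoint B I := by
      rw [Finset.disjoint_left]
      intro a haB haI
      have := hBsub haB
      rw [Finset.mem_sdiff] at this
      exact this.2 haI
    -- pointwise bound
    have hpt : ∀ j ∈ Finset.Icc 1 t,
        ((I ∩ P j).card : ℤ) - ((nvec j : ℤ) - τ j) ≤ τ j - ((B ∩ P j).card : ℤ) := by
      intro j hj
      rw [Finset.mem_Icc] at hj
      have hjr : j ∈ Finset.Icc 1 r := by simp [Finset.mem_Icc]; omega
      have hd : Disjoint (I ∩ P j) (B ∩ P j) :=
        (hdisjBI.symm).mono Finset.inter_subset_left Finset.inter_subset_left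
      have hsub : (I ∩ P j) ∪ (B ∩ P j) ⊆ P j :=
        Finset.union_subset Finset.inter_subset_right Finset.inter_subset_right
      have h1 : (I ∩ P j).card + (B ∩ P j).card ≤ (P j).card := by
        rw [← Finset.card_union_of_disjoint hd]
        exact Finset.card_le_card hsub
      rw [hcard j hjr] at h1
      omega
    have hsum := Finset.sum_le_sum hpt
    have hsplitτ : (∑ s ∈ Finset.Icc 1 t, τ s) + ∑ s ∈ Finset.Icc (t+1) r, τ s =
        ∑ s ∈ Finset.Icc 1 r, τ s := icc_split τ r t ht.2
    have hsplitB : (∑ s ∈ Finset.Icc 1 t, ((B ∩ P s).card : ℤ)) +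
        ∑ s ∈ Finset.Icc (t+1) r, ((B ∩ P s).card : ℤ) =
        ∑ s ∈ Finset.Icc 1 r, ((B ∩ P s).card : ℤ) :=
      icc_split (fun s => ((B ∩ P s).card : ℤ)) r t ht.2
    have hpc : ∑ s ∈ Finset.Icc 1 r, ((B ∩ P s).card : ℤ) = B.card :=
      partition_card r P hdisj hcover B
    have htail : (∑ s ∈ Finset.Icc (t+1) r, ((B ∩ P s).card : ℤ)) ≤
        ∑ s ∈ Finset.Icc (t+1) r, τ s := by
      rcases Nat.lt_or_ge t r with h | h
      · exact hBind (t+1) (by simp [Finset.mem_Icc]; omega)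
      · have : t = r := by omega
        rw [this]
        rw [Finset.Icc_eq_empty (by omega)]
        simp
    have hdist : (∑ j ∈ Finset.Icc 1 t, (τ j - ((B ∩ P j).card : ℤ))) =
        (∑ j ∈ Finset.Icc 1 t, τ j) - ∑ j ∈ Finset.Icc 1 t, ((B ∩ P j).card : ℤ) :=
      Finset.sum_sub_distrib _ _
    omega
  · intro hI
    set C : Finset α := Finset.univ \ I with hC
    have hcc : ∀ j ∈ Finset.Icc 1 r, ((C ∩ P j).card : ℤ) = (nvec j : ℤ) - ((I ∩ P j).card : ℤ) := by
      intro j hj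
      have h1 : C ∩ P j = P j \ I := by
        ext x
        simp [hC, Finset.mem_sdiff]
        tauto
      rw [h1]
      have := Finset.card_inter_add_card_sdiff (P j) I
      have h2 : P j ∩ I = I ∩ P j := Finset.inter_comm _ _
      rw [h2] at this
      rw [← hcard j hj]
      omega
    have hpre : ∀ t ∈ Finset.Icc 1 r,
        (∑ s ∈ Finset.Icc 1 t, τ s) ≤ ∑ s ∈ Finset.Icc 1 t, ((C ∩ P s).card : ℤ) := by
      intro t ht
      have h1 := hI t ht
      rw [Finset.mem_Icc] at ht
      have h2 : (∑ s ∈ Finset.Icc 1 t, ((C ∩ P s).card : ℤ)) =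
          ∑ s ∈ Finset.Icc 1 t, ((nvec s : ℤ) - ((I ∩ P s).card : ℤ)) := by
        apply Finset.sum_congr rfl
        intro s hs
        rw [Finset.mem_Icc] at hs
        exact hcc s (by simp [Finset.mem_Icc]; omega)
      rw [h2]
      have h3 : (∑ j ∈ Finset.Icc 1 t, (((I ∩ P j).card : ℤ) - ((nvec j : ℤ) - τ j))) =
          (∑ j ∈ Finset.Icc 1 t, ((I ∩ P j).card : ℤ)) -
            ((∑ j ∈ Finset.Icc 1 t, (nvec j : ℤ)) - ∑ j ∈ Finset.Icc 1 t, τ j) := by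
        rw [← Finset.sum_sub_distrib, ← Finset.sum_sub_distrib]
      have h4 : (∑ s ∈ Finset.Icc 1 t, ((nvec s : ℤ) - ((I ∩ P s).card : ℤ))) =
          (∑ j ∈ Finset.Icc 1 t, (nvec j : ℤ)) - ∑ j ∈ Finset.Icc 1 t, ((I ∩ P j).card : ℤ) :=
        Finset.sum_sub_distrib _ _
      omega
    obtain ⟨B, hBC, hBind, hBcard⟩ :=
      exists_indep_full r hr P τ hdisj hcover (fun i hi => (hτ i hi).1) C hpre
    exact ⟨B, (nbase_iff r hr P τ hdisj hcover hτub B).mpr ⟨hBind, hBcard⟩, hBC⟩
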